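/- For every s ≥ 0, the integrals J(s) = ∫_s^∞ y·K₀(y)·√(y² − s²) dy and L(s) = (1/2) · ∫_s^∞ y²·K₁(y)·√(y² − s²) dy have the closed forms J(s) = (π/2)·(1 + s)·e^{−s} and L(s) = (π/4)·(3 + 3s + s²)·e^{−s}. -/

import Mathlib

open Real MeasureTheory Set Filter
open scoped ENNReal

/-- Modified Bessel function of the second kind of order 0, via the integral
representation `K₀(x) = ∫₀^∞ e^{−x√(k²+1)} / √(k²+1) dk`. -/
noncomputable def K0 (x : ℝ) : ℝ :=
  ∫ k in Set.Ioi (0 : ℝ), Real.exp (-x * Real.sqrt (k ^ 2 + 1)) / Real.sqrt (k ^ 2 + 1)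

/-- Modified Bessel function of the second kind of order 1, via the integral
representation `K₁(x) = ∫₀^∞ e^{−x√(k²+1)} dk`. -/
noncomputable def K1 (x : ℝ) : ℝ :=
  ∫ k in Set.Ioi (0 : ℝ), Real.exp (-x * Real.sqrt (k ^ 2 + 1))


lemma sqrt_le (k : ℝ) (hk : 0 ≤ k) : k ≤ Real.sqrt (k^2+1) := by
  nlinarith [Real.sq_sqrt (show (0:ℝ) ≤ k^2+1 by positivity), Real.sqrt_nonneg (k^2+1)]

lemma one_le_sqrt (k : ℝ) : 1 ≤ Real.sqrt (k^2+1) := by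
  nlinarith [Real.sq_sqrt (show (0:ℝ) ≤ k^2+1 by positivity), Real.sqrt_nonneg (k^2+1)]

lemma K1_integrand_integrable {y : ℝ} (hy : 0 < y) :
    IntegrableOn (fun k => Real.exp (-y * Real.sqrt (k^2+1))) (Set.Ioi (0:ℝ)) := by
  apply Integrable.mono (exp_neg_integrableOn_Ioi 0 hy)
  · apply Continuous.aestronglyMeasurable
    continuity
  · filter_upwards [ae_restrict_mem measurableSet_Ioi] with k hk
    rw [norm_of_nonneg (Real.exp_nonneg _), norm_of_nonneg (Real.exp_nonneg _)]
    apply Real.exp_le_exp.mpr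
    have := sqrt_le k (le_of_lt hk)
    nlinarith

lemma K0_integrand_integrable {y : ℝ} (hy : 0 < y) :
    IntegrableOn (fun k => Real.exp (-y * Real.sqrt (k^2+1)) / Real.sqrt (k^2+1)) (Set.Ioi (0:ℝ)) := by
  apply Integrable.mono (K1_integrand_integrable hy)
  · apply Continuous.aestronglyMeasurable
    apply Continuous.div (by continuity) (by continuity)
    intro k
    have := one_le_sqrt k
    positivity
  · filter_upwards with k
    have h1 := one_le_sqrt k
    rw [norm_of_nonneg (by positivity), norm_of_nonneg (Real.exp_nonneg _)]
    calc Real.exp (-y * Real.sqrt (k^2+1)) / Real.sqrt (k^2+1)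
        ≤ Real.exp (-y * Real.sqrt (k^2+1)) / 1 :=
          div_le_div_of_nonneg_left (Real.exp_nonneg _) one_pos h1
      _ = _ := by simp

lemma lintegral_image_cov {s : Set ℝ} {f f' : ℝ → ℝ}
    (hs : MeasurableSet s) (hf' : ∀ x ∈ s, HasDerivWithinAt f (f' x) s x)
    (hf : Set.InjOn f s) (g : ℝ → ℝ≥0∞) :
    ∫⁻ x in f '' s, g x = ∫⁻ x in s, ENNReal.ofReal |f' x| * g (f x) := by
  simpa only [ContinuousLinearMap.det_toSpanSingleton] using
    lintegral_image_eq_lintegral_abs_det_fderiv_mul volume hs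
      (fun x hx => (hf' x hx).hasFDerivWithinAt) hf g

lemma aux_cov {y : ℝ} (hy : 0 < y) (w : ℝ → ℝ) :
    ∫⁻ k in Set.Ioi (0:ℝ), ENNReal.ofReal (w (y * Real.sqrt (k^2+1)) / Real.sqrt (k^2+1))
      = ∫⁻ r in Set.Ioi y, ENNReal.ofReal (w r / Real.sqrt (r^2 - y^2)) := by
  set f : ℝ → ℝ := fun r => Real.sqrt (r^2 - y^2) / y with hf
  have hpos : ∀ r ∈ Set.Ioi y, 0 < r^2 - y^2 := by
    intro r hr
    have hr' : y < r := hr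
    nlinarith [hr'.trans_le (le_refl r), hy]
  have hderiv : ∀ r ∈ Set.Ioi y, HasDerivWithinAt f (r / (Real.sqrt (r^2 - y^2) * y)) (Set.Ioi y) r := by
    intro r hr
    have h0 : r^2 - y^2 ≠ 0 := ne_of_gt (hpos r hr)
    have h1 : HasDerivAt (fun r : ℝ => r^2 - y^2) (2*r) r := by
      simpa using (hasDerivAt_pow 2 r).sub_const (y^2)
    have h2 : HasDerivAt (fun r : ℝ => Real.sqrt (r^2 - y^2)) (2*r / (2 * Real.sqrt (r^2-y^2))) r :=
      h1.sqrt h0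
    have h3 := h2.div_const y
    convert h3.hasDerivWithinAt using 1
    · rfl
    · rfl
    have : Real.sqrt (r^2-y^2) ≠ 0 := ne_of_gt (Real.sqrt_pos.mpr (hpos r hr))
    field_simp
  have hinj : Set.InjOn f (Set.Ioi y) := by
    have : StrictMonoOn f (Set.Ioi y) := by
      intro a ha b hb hab
      have ha' : y < a := ha
      have : a^2 - y^2 < b^2 - y^2 := by nlinarith
      exact div_lt_div_of_pos_right
        (Real.sqrt_lt_sqrt (le_of_lt (hpos a ha)) this) hy
    exact this.injOn
  have himg : f '' Set.Ioi y = Set.Ioi (0:ℝ) := by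
    ext p
    constructor
    · rintro ⟨r, hr, rfl⟩
      exact div_pos (Real.sqrt_pos.mpr (hpos r hr)) hy
    · intro hp
      refine ⟨y * Real.sqrt (p^2+1), ?_, ?_⟩
      · have hp' : (0:ℝ) < p := hp
        have h1 : (1:ℝ) < Real.sqrt (p^2+1) := by
          nlinarith [Real.sq_sqrt (show (0:ℝ) ≤ p^2+1 by positivity), Real.sqrt_nonneg (p^2+1)]
        simpa using (mul_lt_mul_of_pos_left h1 hy)
      · have hp' : (0:ℝ) < p := hp
        have h2 : (y * Real.sqrt (p^2+1))^2 - y^2 = (y*p)^2 := by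
          rw [mul_pow, Real.sq_sqrt (by positivity)]
          ring
        rw [hf]
        simp only [h2]
        rw [Real.sqrt_sq (by positivity)]
        field_simp
  calc ∫⁻ k in Set.Ioi (0:ℝ), ENNReal.ofReal (w (y * Real.sqrt (k^2+1)) / Real.sqrt (k^2+1))
      = ∫⁻ k in f '' Set.Ioi y, ENNReal.ofReal (w (y * Real.sqrt (k^2+1)) / Real.sqrt (k^2+1)) := by
        rw [himg]
    _ = ∫⁻ r in Set.Ioi y, ENNReal.ofReal |r / (Real.sqrt (r^2 - y^2) * y)|
          * ENNReal.ofReal (w (y * Real.sqrt ((f r)^2+1)) / Real.sqrt ((f r)^2+1)) :=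
        lintegral_image_cov measurableSet_Ioi hderiv hinj _
    _ = ∫⁻ r in Set.Ioi y, ENNReal.ofReal (w r / Real.sqrt (r^2 - y^2)) := by
        apply setLIntegral_congr_fun measurableSet_Ioi
        intro r hr
        dsimp only
        have hr0 : 0 < r := hy.trans hr
        have hp := hpos r hr
        have hsq : Real.sqrt ((f r)^2 + 1) = r / y := by
          rw [hf]
          have : (Real.sqrt (r^2-y^2) / y)^2 + 1 = (r/y)^2 := by
            rw [div_pow, Real.sq_sqrt hp.le]
            field_simp
            ring
          rw [this, Real.sqrt_sq (by positivity)]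
        rw [hsq]
        have h5 : y * (r / y) = r := by field_simp
        rw [h5, ← ENNReal.ofReal_mul (abs_nonneg _)]
        congr 1
        have hsp : 0 < Real.sqrt (r^2 - y^2) := Real.sqrt_pos.mpr hp
        rw [abs_of_pos (by positivity)]
        rw [div_div_eq_mul_div]
        field_simp
lemma K0_rep {y : ℝ} (hy : 0 < y) :
    ENNReal.ofReal (K0 y)
      = ∫⁻ r in Set.Ioi y, ENNReal.ofReal (Real.exp (-r) / Real.sqrt (r^2 - y^2)) := by
  have h1 : ENNReal.ofReal (K0 y)
      = ∫⁻ k in Set.Ioi (0:ℝ), ENNReal.ofReal (Real.exp (-y * Real.sqrt (k^2+1)) / Real.sqrt (k^2+1)) := by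
    apply ofReal_integral_eq_lintegral_ofReal (K0_integrand_integrable hy)
    filter_upwards with k
    positivity
  rw [h1, ← aux_cov hy (fun t => Real.exp (-t))]
  apply lintegral_congr_ae
  filter_upwards with k
  rw [neg_mul]

lemma K1_rep {y : ℝ} (hy : 0 < y) :
    ENNReal.ofReal (y * K1 y)
      = ∫⁻ r in Set.Ioi y, ENNReal.ofReal (r * Real.exp (-r) / Real.sqrt (r^2 - y^2)) := by
  have h0 : y * K1 y = ∫ k in Set.Ioi (0:ℝ), y * Real.exp (-y * Real.sqrt (k^2+1)) := by
    rw [K1, ← integral_const_mul]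
  have h1 : ENNReal.ofReal (y * K1 y)
      = ∫⁻ k in Set.Ioi (0:ℝ), ENNReal.ofReal (y * Real.exp (-y * Real.sqrt (k^2+1))) := by
    rw [h0]
    apply ofReal_integral_eq_lintegral_ofReal ((K1_integrand_integrable hy).const_mul y)
    filter_upwards with k
    positivity
  rw [h1, ← aux_cov hy (fun t => t * Real.exp (-t))]
  apply lintegral_congr_ae
  filter_upwards with k
  congr 1
  have h2 : (0:ℝ) < Real.sqrt (k^2+1) := lt_of_lt_of_le one_pos (one_le_sqrt k)
  rw [neg_mul]
  field_simp
lemma inner_beta {s r : ℝ} (hs : 0 ≤ s) (hsr : s < r) :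
    ∫⁻ y in Set.Ioo s r, ENNReal.ofReal (y * Real.sqrt (y^2 - s^2) / Real.sqrt (r^2 - y^2))
      = ENNReal.ofReal (π/4 * (r^2 - s^2)) := by
  have hr0 : 0 < r := lt_of_le_of_lt hs hsr
  set c : ℝ := r^2 - s^2 with hc
  have hc0 : 0 < c := by nlinarith
  set g : ℝ → ℝ := fun θ => Real.sqrt (s^2 + c * Real.sin θ^2) with hg
  have harg : ∀ θ ∈ Set.Ioo 0 (π/2), 0 < s^2 + c * Real.sin θ^2 := by
    intro θ hθ
    have h1 : 0 < Real.sin θ := Real.sin_pos_of_pos_of_lt_pi hθ.1 (by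
      linarith [pi_pos, hθ.2])
    positivity
  have hsin1 : ∀ θ ∈ Set.Ioo 0 (π/2), Real.sin θ < 1 := by
    intro θ hθ
    calc Real.sin θ < Real.sin (π/2) := by
          apply Real.strictMonoOn_sin ⟨by linarith [hθ.1, pi_pos], hθ.2.le⟩
            ⟨by linarith [pi_pos], le_refl _⟩ hθ.2
      _ = 1 := Real.sin_pi_div_two
  have hderiv : ∀ θ ∈ Set.Ioo 0 (π/2),
      HasDerivWithinAt g (c * Real.sin θ * Real.cos θ / g θ) (Set.Ioo 0 (π/2)) θ := by
    intro θ hθ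
    have h1 : HasDerivAt (fun θ : ℝ => s^2 + c * Real.sin θ^2)
        (c * (2 * Real.sin θ * Real.cos θ)) θ := by
      have := ((Real.hasDerivAt_sin θ).pow 2).const_mul c
      simpa [mul_comm, mul_assoc, mul_left_comm] using this.const_add (s^2)
    have h2 := h1.sqrt (ne_of_gt (harg θ hθ))
    convert h2.hasDerivWithinAt using 1
    · rfl
    · rfl
    rw [hg]
    have h3 : 0 < Real.sqrt (s^2 + c * Real.sin θ^2) := Real.sqrt_pos.mpr (harg θ hθ)
    field_simp
  have hmono : StrictMonoOn g (Set.Ioo 0 (π/2)) := by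
    intro a ha b hb hab
    have h1 : Real.sin a < Real.sin b :=
      Real.strictMonoOn_sin ⟨by linarith [ha.1, pi_pos], ha.2.le⟩
        ⟨by linarith [hb.1, pi_pos], hb.2.le⟩ hab
    have h2 : 0 < Real.sin a := Real.sin_pos_of_pos_of_lt_pi ha.1 (by linarith [pi_pos, ha.2])
    apply Real.sqrt_lt_sqrt (by positivity)
    nlinarith [mul_pos (sub_pos.mpr h1) (by linarith : (0:ℝ) < Real.sin a + Real.sin b)]
  have himg : g '' Set.Ioo 0 (π/2) = Set.Ioo s r := by
    ext y
    constructor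
    · rintro ⟨θ, hθ, rfl⟩
      have h1 : 0 < Real.sin θ := Real.sin_pos_of_pos_of_lt_pi hθ.1 (by linarith [pi_pos, hθ.2])
      have h2 := hsin1 θ hθ
      constructor
      · rw [hg]
        calc s = Real.sqrt (s^2) := (Real.sqrt_sq hs).symm
          _ < _ := Real.sqrt_lt_sqrt (sq_nonneg s) (by nlinarith [pow_pos h1 2])
      · rw [hg]
        calc Real.sqrt (s^2 + c * Real.sin θ^2)
            < Real.sqrt (r^2) := Real.sqrt_lt_sqrt (by positivity) (by
              nlinarith [pow_lt_one₀ h1.le h2 two_ne_zero])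
          _ = r := Real.sqrt_sq hr0.le
    · intro hy
      have hy0 : 0 < y := lt_of_le_of_lt hs hy.1
      have hq0 : 0 < (y^2 - s^2)/c := by
        apply div_pos _ hc0
        nlinarith [hy.1]
      have hq1 : (y^2 - s^2)/c < 1 := by
        rw [div_lt_one hc0]
        nlinarith [hy.2]
      set x : ℝ := Real.sqrt ((y^2 - s^2)/c) with hx
      have hx0 : 0 < x := Real.sqrt_pos.mpr hq0
      have hx1 : x < 1 := by
        rw [hx, show (1:ℝ) = Real.sqrt 1 from (Real.sqrt_one).symm]
        exact Real.sqrt_lt_sqrt hq0.le (by simpa using hq1)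
      refine ⟨Real.arcsin x, ⟨Real.arcsin_pos.mpr hx0, ?_⟩, ?_⟩
      · exact Real.arcsin_lt_pi_div_two.mpr hx1
      · show Real.sqrt (s^2 + c * Real.sin (Real.arcsin x)^2) = y
        have hsx : Real.sin (Real.arcsin x) = x :=
          Real.sin_arcsin (by linarith) (by linarith)
        rw [hsx, hx, Real.sq_sqrt hq0.le]
        rw [show s^2 + c * ((y^2-s^2)/c) = y^2 by field_simp; ring]
        exact Real.sqrt_sq hy0.le
  calc ∫⁻ y in Set.Ioo s r, ENNReal.ofReal (y * Real.sqrt (y^2 - s^2) / Real.sqrt (r^2 - y^2))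
      = ∫⁻ y in g '' Set.Ioo 0 (π/2), ENNReal.ofReal (y * Real.sqrt (y^2 - s^2) / Real.sqrt (r^2 - y^2)) := by
        rw [himg]
    _ = ∫⁻ θ in Set.Ioo 0 (π/2), ENNReal.ofReal |c * Real.sin θ * Real.cos θ / g θ|
          * ENNReal.ofReal (g θ * Real.sqrt ((g θ)^2 - s^2) / Real.sqrt (r^2 - (g θ)^2)) :=
        lintegral_image_cov measurableSet_Ioo hderiv hmono.injOn _
    _ = ∫⁻ θ in Set.Ioo 0 (π/2), ENNReal.ofReal (c * Real.sin θ^2) := by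
        apply setLIntegral_congr_fun measurableSet_Ioo
        intro θ hθ
        dsimp only
        have h1 : 0 < Real.sin θ := Real.sin_pos_of_pos_of_lt_pi hθ.1 (by linarith [pi_pos, hθ.2])
        have h2 : 0 < Real.cos θ := Real.cos_pos_of_mem_Ioo ⟨by linarith [pi_pos, hθ.1], hθ.2⟩
        have h3 : 0 < g θ := Real.sqrt_pos.mpr (harg θ hθ)
        have h4 : (g θ)^2 = s^2 + c * Real.sin θ^2 := Real.sq_sqrt (harg θ hθ).le
        have h5 : (g θ)^2 - s^2 = c * Real.sin θ^2 := by rw [h4]; ring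
        have h6 : r^2 - (g θ)^2 = c * Real.cos θ^2 := by
          rw [h4, hc]
          nlinarith [Real.sin_sq_add_cos_sq θ]
        rw [h5, h6, ← ENNReal.ofReal_mul (abs_nonneg _)]
        congr 1
        rw [Real.sqrt_mul hc0.le, Real.sqrt_mul hc0.le,
          Real.sqrt_sq h1.le, Real.sqrt_sq h2.le, abs_of_pos (by positivity)]
        have hsc : 0 < Real.sqrt c := Real.sqrt_pos.mpr hc0
        field_simp
    _ = ENNReal.ofReal (π/4 * (r^2 - s^2)) := by
        rw [← ofReal_integral_eq_lintegral_ofReal]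
        · congr 1
          rw [show (Set.Ioo (0:ℝ) (π/2)) = Set.Ioo 0 (π/2) from rfl]
          rw [← MeasureTheory.integral_Ioc_eq_integral_Ioo,
            ← intervalIntegral.integral_of_le (by positivity : (0:ℝ) ≤ π/2)]
          rw [intervalIntegral.integral_const_mul, integral_sin_sq]
          simp [Real.sin_pi_div_two, Real.cos_pi_div_two]
          ring
        · apply (Integrable.const_mul _ c)
          apply Integrable.mono_measure _
            (Measure.restrict_mono Set.Ioo_subset_Icc_self (le_refl _))
          exact (Continuous.integrableOn_Icc (by continuity))
        · filter_upwards with θ'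
          positivity

lemma vanish_sqrt {a b : ℝ} (ha : 0 ≤ a) (hab : a ≤ b) : Real.sqrt (a^2 - b^2) = 0 := by
  have : a^2 - b^2 ≤ 0 := by nlinarith
  exact Real.sqrt_eq_zero_of_nonpos this

lemma tonelli_step (s : ℝ) (hs : 0 ≤ s) (w : ℝ → ℝ) (hw : Measurable w) (hw0 : ∀ r ∈ Set.Ioi s, 0 ≤ w r) :
    ∫⁻ y in Set.Ioi s, (∫⁻ r in Set.Ioi y,
        ENNReal.ofReal (y * Real.sqrt (y^2 - s^2) * w r / Real.sqrt (r^2 - y^2)))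
      = ∫⁻ r in Set.Ioi s, ENNReal.ofReal (w r * (π/4 * (r^2 - s^2))) := by
  set G : ℝ → ℝ → ℝ≥0∞ := fun y r =>
    ENNReal.ofReal (y * Real.sqrt (y^2 - s^2) * w r / Real.sqrt (r^2 - y^2)) with hG
  have hGm : AEMeasurable (Function.uncurry G)
      ((volume.restrict (Set.Ioi s)).prod (volume.restrict (Set.Ioi s))) := by
    apply Measurable.aemeasurable
    apply Measurable.ennreal_ofReal
    apply Measurable.div
    · apply Measurable.mul
      · apply Measurable.mul measurable_fst
        exact (continuous_fst.pow 2 |>.sub continuous_const).sqrt.measurable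
      · exact hw.comp measurable_snd
    · exact (continuous_snd.pow 2 |>.sub (continuous_fst.pow 2)).sqrt.measurable
  have step1 : ∫⁻ y in Set.Ioi s, (∫⁻ r in Set.Ioi y, G y r)
      = ∫⁻ y in Set.Ioi s, (∫⁻ r in Set.Ioi s, G y r) := by
    apply setLIntegral_congr_fun measurableSet_Ioi
    intro y hy
    dsimp only
    have hy' : s < y := hy
    rw [← Set.Ioc_union_Ioi_eq_Ioi hy'.le,
      lintegral_union measurableSet_Ioi (Set.Ioc_disjoint_Ioi le_rfl)]
    have hzero : ∫⁻ r in Set.Ioc s y, G y r = 0 := by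
      rw [← lintegral_zero (μ := volume.restrict (Set.Ioc s y))]
      apply setLIntegral_congr_fun measurableSet_Ioc
      intro r hr
      rw [hG]
      simp only
      rw [vanish_sqrt (le_trans hs hr.1.le) hr.2, div_zero, ENNReal.ofReal_zero]
    rw [hzero, zero_add]
  have step2 : ∫⁻ y in Set.Ioi s, (∫⁻ r in Set.Ioi s, G y r)
      = ∫⁻ r in Set.Ioi s, (∫⁻ y in Set.Ioi s, G y r) :=
    lintegral_lintegral_swap hGm
  have step3 : ∫⁻ r in Set.Ioi s, (∫⁻ y in Set.Ioi s, G y r)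
      = ∫⁻ r in Set.Ioi s, ENNReal.ofReal (w r * (π/4 * (r^2 - s^2))) := by
    apply setLIntegral_congr_fun measurableSet_Ioi
    intro r hr
    dsimp only
    have hr' : s < r := hr
    have hred : ∫⁻ y in Set.Ioi s, G y r = ∫⁻ y in Set.Ioo s r, G y r := by
      rw [← Set.Ioo_union_Ici_eq_Ioi hr',
        lintegral_union measurableSet_Ici (by
          apply Set.disjoint_left.mpr
          intro y hy hy2
          exact absurd hy.2 (not_lt.mpr hy2))]
      have hzero : ∫⁻ y in Set.Ici r, G y r = 0 := by
        rw [← lintegral_zero (μ := volume.restrict (Set.Ici r))]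
        apply setLIntegral_congr_fun measurableSet_Ici
        intro y hy
        rw [hG]
        simp only
        rw [vanish_sqrt (le_trans hs hr'.le) hy, div_zero, ENNReal.ofReal_zero]
      rw [hzero, add_zero]
    rw [hred]
    have hcong : ∫⁻ y in Set.Ioo s r, G y r
        = ∫⁻ y in Set.Ioo s r, ENNReal.ofReal (w r)
            * ENNReal.ofReal (y * Real.sqrt (y^2 - s^2) / Real.sqrt (r^2 - y^2)) := by
      apply setLIntegral_congr_fun measurableSet_Ioo
      intro y hy
      rw [hG]
      simp only
      rw [← ENNReal.ofReal_mul (hw0 r hr)]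
      congr 1
      ring
    rw [hcong, lintegral_const_mul' _ _ ENNReal.ofReal_ne_top, inner_beta hs hr',
      ← ENNReal.ofReal_mul (hw0 r hr)]
  rw [step1, step2, step3]

lemma K0_sm : StronglyMeasurable K0 := by
  have hc : Continuous fun p : ℝ × ℝ =>
      Real.exp (-p.1 * Real.sqrt (p.2^2+1)) / Real.sqrt (p.2^2+1) := by
    apply Continuous.div (by continuity) (by continuity)
    intro p
    have := one_le_sqrt p.2
    positivity
  exact hc.stronglyMeasurable.integral_prod_right'

lemma K1_sm : StronglyMeasurable K1 := by
  have hc : Continuous fun p : ℝ × ℝ => Real.exp (-p.1 * Real.sqrt (p.2^2+1)) := by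
    continuity
  exact hc.stronglyMeasurable.integral_prod_right'

lemma integrable_pow_exp (n : ℕ) {s : ℝ} (hs : 0 ≤ s) :
    IntegrableOn (fun r => r^n * Real.exp (-r)) (Set.Ioi s) := by
  apply IntegrableOn.mono_set _ (Set.Ioi_subset_Ioi hs)
  have h := Real.GammaIntegral_convergent (show (0:ℝ) < n+1 by positivity)
  apply h.congr_fun _ measurableSet_Ioi
  intro x hx
  show Real.exp (-x) * x ^ ((n:ℝ)+1-1) = x ^ n * Real.exp (-x)
  rw [show ((n:ℝ)+1-1) = (n:ℝ) by ring, Real.rpow_natCast]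
  ring

lemma ftc_eval {s : ℝ} {F u : ℝ → ℝ} (hF : ∀ x, HasDerivAt F (u x) x)
    (hint : IntegrableOn u (Set.Ioi s)) (hlim : Tendsto F atTop (nhds 0)) :
    ∫ r in Set.Ioi s, u r = - F s := by
  simpa using integral_Ioi_of_hasDerivAt_of_tendsto
    (hF s).continuousAt.continuousWithinAt (fun x _ => hF x) hint hlim

lemma hasDerivAt_exp_neg (r : ℝ) : HasDerivAt (fun r : ℝ => Real.exp (-r)) (-Real.exp (-r)) r := by
  exact ((Real.hasDerivAt_exp (-r)).comp r (hasDerivAt_neg r)).congr_deriv (by simp)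

lemma tendsto_quad_exp (a b c d : ℝ) :
    Tendsto (fun r : ℝ => (a * r^3 + b * r^2 + c * r + d) * Real.exp (-r)) atTop (nhds 0) := by
  have t3 := tendsto_pow_mul_exp_neg_atTop_nhds_zero 3
  have t2 := tendsto_pow_mul_exp_neg_atTop_nhds_zero 2
  have t1 := tendsto_pow_mul_exp_neg_atTop_nhds_zero 1
  have t0 := tendsto_pow_mul_exp_neg_atTop_nhds_zero 0
  have h := ((t3.const_mul a).add (t2.const_mul b)).add ((t1.const_mul c).add (t0.const_mul d))
  simp only [mul_zero, add_zero] at h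
  apply h.congr
  intro r
  simp only [pow_one, pow_zero]
  ring

lemma eval_J (s : ℝ) (hs : 0 ≤ s) :
    ∫ r in Set.Ioi s, Real.exp (-r) * (π/4 * (r^2 - s^2))
      = π/2 * (1+s) * Real.exp (-s) := by
  set F : ℝ → ℝ := fun r => -(π/4) * (r^2 + 2*r + 2 - s^2) * Real.exp (-r) with hF
  have hderiv : ∀ x, HasDerivAt F (Real.exp (-x) * (π/4 * (x^2 - s^2))) x := by
    intro x
    have h1 : HasDerivAt (fun r : ℝ => r^2 + 2*r + 2 - s^2) (2*x+2) x := by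
      have := ((hasDerivAt_pow 2 x).add ((hasDerivAt_id x).const_mul 2)).add_const 2
      simpa using (this.sub_const (s^2))
    have h2 := ((h1.mul (hasDerivAt_exp_neg x)).const_mul (-(π/4)))
    convert h2 using 1
    · rfl
    · rfl
    · ext r
      rw [hF]
      simp only [Pi.mul_apply]
      ring
    · ring
  have hint : IntegrableOn (fun r => Real.exp (-r) * (π/4 * (r^2 - s^2))) (Set.Ioi s) := by
    have h := ((integrable_pow_exp 2 hs).const_mul (π/4)).sub
      ((integrable_pow_exp 0 hs).const_mul (π/4*s^2))
    apply IntegrableOn.congr_fun h _ measurableSet_Ioi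
    intro x _
    simp only [Pi.sub_apply, pow_zero, one_mul]
    ring
  have hlim : Tendsto F atTop (nhds 0) := by
    apply (tendsto_quad_exp 0 (-(π/4)) (-(π/2)) (-(π/4)*(2-s^2))).congr
    intro r
    rw [hF]
    ring
  rw [ftc_eval hderiv hint hlim, hF]
  simp only
  ring

lemma integrable_J {s : ℝ} (hs : 0 ≤ s) :
    IntegrableOn (fun r => Real.exp (-r) * (π/4 * (r^2 - s^2))) (Set.Ioi s) := by
  have h := ((integrable_pow_exp 2 hs).const_mul (π/4)).sub
    ((integrable_pow_exp 0 hs).const_mul (π/4*s^2))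
  apply IntegrableOn.congr_fun h _ measurableSet_Ioi
  intro x _
  simp only [Pi.sub_apply, pow_zero, one_mul]
  ring

lemma integrable_L {s : ℝ} (hs : 0 ≤ s) :
    IntegrableOn (fun r => r * Real.exp (-r) * (π/4 * (r^2 - s^2))) (Set.Ioi s) := by
  have h := ((integrable_pow_exp 3 hs).const_mul (π/4)).sub
    ((integrable_pow_exp 1 hs).const_mul (π/4*s^2))
  apply IntegrableOn.congr_fun h _ measurableSet_Ioi
  intro x _
  simp only [Pi.sub_apply, pow_one]
  ring

lemma eval_L (s : ℝ) (hs : 0 ≤ s) :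
    ∫ r in Set.Ioi s, r * Real.exp (-r) * (π/4 * (r^2 - s^2))
      = π/2 * (3 + 3*s + s^2) * Real.exp (-s) := by
  set F : ℝ → ℝ := fun r => -(π/4) * (r^3 + 3*r^2 + 6*r + 6 - s^2*(r+1)) * Real.exp (-r) with hF
  have hderiv : ∀ x, HasDerivAt F (x * Real.exp (-x) * (π/4 * (x^2 - s^2))) x := by
    intro x
    have h1 : HasDerivAt (fun r : ℝ => r^3 + 3*r^2 + 6*r + 6 - s^2*(r+1))
        (3*x^2 + 6*x + 6 - s^2) x := by
      have h := (((hasDerivAt_pow 3 x).add ((hasDerivAt_pow 2 x).const_mul 3)).add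
          (((hasDerivAt_id x).const_mul 6).add_const 6)).sub
          (((hasDerivAt_id x).add_const 1).const_mul (s^2))
      convert h using 1
      · rfl
      · rfl
      · funext r
        simp only [id_eq, Pi.add_apply, Pi.sub_apply]
        ring
      · simp only [Nat.cast_ofNat, id_eq]
        push_cast
        ring
    have h2 := ((h1.mul (hasDerivAt_exp_neg x)).const_mul (-(π/4)))
    convert h2 using 1
    · rfl
    · rfl
    · funext r
      rw [hF]
      simp only [Pi.mul_apply]
      ring
    · ring
  have hlim : Tendsto F atTop (nhds 0) := by
    apply (tendsto_quad_exp (-(π/4)) (-(3*π/4)) (-(π/4)*(6-s^2)) (-(π/4)*(6-s^2))).congr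
    intro r
    rw [hF]
    ring
  rw [ftc_eval hderiv (integrable_L hs) hlim, hF]
  simp only
  ring

theorem besselK_JL_closed_forms (s : ℝ) (hs : 0 ≤ s) :
    (∫ y in Set.Ioi s, y * K0 y * Real.sqrt (y ^ 2 - s ^ 2))
        = (π / 2) * (1 + s) * Real.exp (-s) ∧
    (1 / 2) * (∫ y in Set.Ioi s, y ^ 2 * K1 y * Real.sqrt (y ^ 2 - s ^ 2))
        = (π / 4) * (3 + 3 * s + s ^ 2) * Real.exp (-s) := by
  have hK0nn : ∀ y, 0 ≤ K0 y := fun y => integral_nonneg fun k => by positivity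
  have hK1nn : ∀ y, 0 ≤ K1 y := fun y => integral_nonneg fun k => by positivity
  have hmsqrt : Measurable fun y : ℝ => Real.sqrt (y^2 - s^2) :=
    (continuous_id.pow 2 |>.sub continuous_const).sqrt.measurable
  constructor
  · have hnn : 0 ≤ᵐ[volume.restrict (Set.Ioi s)]
        fun y => y * K0 y * Real.sqrt (y^2 - s^2) := by
      filter_upwards [ae_restrict_mem measurableSet_Ioi] with y hy
      have h1 : 0 ≤ y := le_trans hs (le_of_lt hy)
      have h2 := hK0nn y
      positivity
    have hsm : AEStronglyMeasurable (fun y => y * K0 y * Real.sqrt (y^2 - s^2))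
        (volume.restrict (Set.Ioi s)) :=
      (((measurable_id.mul K0_sm.measurable).mul hmsqrt)).aestronglyMeasurable
    rw [integral_eq_lintegral_of_nonneg_ae hnn hsm]
    have key : (∫⁻ y in Set.Ioi s, ENNReal.ofReal (y * K0 y * Real.sqrt (y^2 - s^2)))
        = ∫⁻ r in Set.Ioi s, ENNReal.ofReal (Real.exp (-r) * (π/4 * (r^2 - s^2))) := by
      rw [← tonelli_step s hs (fun r => Real.exp (-r))
        (Real.continuous_exp.comp continuous_neg).measurable (fun r _ => Real.exp_nonneg _)]
      apply setLIntegral_congr_fun measurableSet_Ioi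
      intro y hy
      dsimp only
      have hy0 : 0 < y := lt_of_le_of_lt hs hy
      rw [show y * K0 y * Real.sqrt (y^2 - s^2) = (y * Real.sqrt (y^2 - s^2)) * K0 y by ring,
        ENNReal.ofReal_mul (by positivity), K0_rep hy0,
        ← lintegral_const_mul' _ _ ENNReal.ofReal_ne_top]
      apply lintegral_congr_ae
      filter_upwards with r
      rw [← ENNReal.ofReal_mul (by positivity)]
      congr 1
      rw [mul_div_assoc']
    have hnnJ : 0 ≤ᵐ[volume.restrict (Set.Ioi s)]
        fun r => Real.exp (-r) * (π/4 * (r^2 - s^2)) := by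
      filter_upwards [ae_restrict_mem measurableSet_Ioi] with r hr
      have h1 : s < r := hr
      have h2 : 0 ≤ r^2 - s^2 := by nlinarith
      positivity
    rw [key, ← ofReal_integral_eq_lintegral_ofReal (integrable_J hs) hnnJ,
      ENNReal.toReal_ofReal (integral_nonneg_of_ae hnnJ), eval_J s hs]
  · have hnn : 0 ≤ᵐ[volume.restrict (Set.Ioi s)]
        fun y => y^2 * K1 y * Real.sqrt (y^2 - s^2) := by
      filter_upwards [ae_restrict_mem measurableSet_Ioi] with y hy
      have h2 := hK1nn y
      positivity
    have hsm : AEStronglyMeasurable (fun y => y^2 * K1 y * Real.sqrt (y^2 - s^2))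
        (volume.restrict (Set.Ioi s)) :=
      ((((measurable_id.pow_const 2).mul K1_sm.measurable).mul hmsqrt)).aestronglyMeasurable
    rw [integral_eq_lintegral_of_nonneg_ae hnn hsm]
    have key : (∫⁻ y in Set.Ioi s, ENNReal.ofReal (y^2 * K1 y * Real.sqrt (y^2 - s^2)))
        = ∫⁻ r in Set.Ioi s, ENNReal.ofReal (r * Real.exp (-r) * (π/4 * (r^2 - s^2))) := by
      rw [← tonelli_step s hs (fun r => r * Real.exp (-r))
        (measurable_id.mul (Real.continuous_exp.comp continuous_neg).measurable)
        (fun r hr => mul_nonneg (hs.trans (le_of_lt hr)) (Real.exp_nonneg _))]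
      apply setLIntegral_congr_fun measurableSet_Ioi
      intro y hy
      dsimp only
      have hy0 : 0 < y := lt_of_le_of_lt hs hy
      rw [show y^2 * K1 y * Real.sqrt (y^2 - s^2)
            = (y * Real.sqrt (y^2 - s^2)) * (y * K1 y) by ring,
        ENNReal.ofReal_mul (by positivity), K1_rep hy0,
        ← lintegral_const_mul' _ _ ENNReal.ofReal_ne_top]
      apply lintegral_congr_ae
      filter_upwards with r
      rw [← ENNReal.ofReal_mul (by positivity)]
      congr 1
      rw [mul_div_assoc']
    have hnnL : 0 ≤ᵐ[volume.restrict (Set.Ioi s)]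
        fun r => r * Real.exp (-r) * (π/4 * (r^2 - s^2)) := by
      filter_upwards [ae_restrict_mem measurableSet_Ioi] with r hr
      have h1 : s < r := hr
      have h0 : 0 ≤ r := hs.trans h1.le
      have h2 : 0 ≤ r^2 - s^2 := by nlinarith
      positivity
    rw [key, ← ofReal_integral_eq_lintegral_ofReal (integrable_L hs) hnnL,
      ENNReal.toReal_ofReal (integral_nonneg_of_ae hnnL), eval_L s hs]
    ring
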